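/- arXiv:2205.06654 — 2 statements merged into one kernel-verified Lean document; each statement's English description precedes it below -/
import Mathlib

section
/- Let ψ : (0,∞) → (0,∞), γ a Borel measure on [0,∞) with γ({0}) = 0, q > 0, and define m_q = Σ_{k≥0} q^k T^k(δ_0) with T(μ) = (1/ψ)·(μ ⋆ γ). If ν is a Borel measure on [0,∞) with ν({0}) = 1 satisfying ψ·ν = q·(γ + γ ⋆ (ν − δ_0)) on (0,∞) (equivalently ψ·(ν − δ_0) = q·(γ ⋆ ν) on (0,∞)), then ν ≥ m_q, i.e. ν(E) ≥ m_q(E) for every Borel set E ⊆ [0,∞). -/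
open MeasureTheory Set Real

/-- Convolution of two measures on ℝ: pushforward of the product along addition. -/
noncomputable def mconv (μ ν : MeasureTheory.Measure ℝ) : MeasureTheory.Measure ℝ :=
  MeasureTheory.Measure.map (fun p : ℝ × ℝ => p.1 + p.2) (μ.prod ν)

/-- The operator `μ ↦ (1/ψ)·(μ ⋆ γ)`. -/
noncomputable def convStep (ψ : ℝ → ℝ) (γ : MeasureTheory.Measure ℝ)
    (μ : MeasureTheory.Measure ℝ) : MeasureTheory.Measure ℝ :=
  (mconv μ γ).withDensity (fun x => ENNReal.ofReal (ψ x)⁻¹)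

/-- The measure `m_q = Σ_k q^k T^k(δ_0)` where `T(μ) = (1/ψ)·(μ ⋆ γ)`. -/
noncomputable def mq (ψ : ℝ → ℝ) (γ : MeasureTheory.Measure ℝ) (q : ℝ) :
    MeasureTheory.Measure ℝ :=
  MeasureTheory.Measure.sum (fun k : ℕ =>
    ENNReal.ofReal (q ^ k) • (convStep ψ γ)^[k] (MeasureTheory.Measure.dirac 0))

/-! ### Auxiliary lemmas -/

open scoped ENNReal NNReal

lemma mconv_apply (μ γ : Measure ℝ) [SFinite γ] {E : Set ℝ} (hE : MeasurableSet E) :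
    mconv μ γ E = ∫⁻ x, γ {y | x + y ∈ E} ∂μ := by
  rw [mconv, Measure.map_apply measurable_add hE, Measure.prod_apply (measurable_add hE)]
  rfl

lemma mconv_mono {μ μ' : Measure ℝ} (γ : Measure ℝ) [SFinite γ] (h : μ ≤ μ') :
    mconv μ γ ≤ mconv μ' γ := by
  refine Measure.le_iff.2 fun s hs => ?_
  rw [mconv_apply _ _ hs, mconv_apply _ _ hs]
  exact lintegral_mono' h le_rfl

lemma withDensity_mono_measure {μ ν : Measure ℝ} (h : μ ≤ ν) (f : ℝ → ℝ≥0∞) :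
    μ.withDensity f ≤ ν.withDensity f := by
  refine Measure.le_iff.2 fun s hs => ?_
  rw [withDensity_apply _ hs, withDensity_apply _ hs]
  exact lintegral_mono' (Measure.restrict_mono subset_rfl h) le_rfl

lemma convStep_mono (ψ : ℝ → ℝ) {μ μ' : Measure ℝ} (γ : Measure ℝ) [SFinite γ]
    (h : μ ≤ μ') : convStep ψ γ μ ≤ convStep ψ γ μ' :=
  withDensity_mono_measure (mconv_mono γ h) _

lemma mconv_comm (μ ν : Measure ℝ) [SFinite μ] [SFinite ν] : mconv μ ν = mconv ν μ := by
  rw [mconv, mconv, ← Measure.prod_swap,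
    Measure.map_map measurable_add measurable_swap]
  congr 1
  funext p
  exact add_comm _ _

lemma mconv_zero (γ : Measure ℝ) : mconv 0 γ = 0 := by
  rw [mconv, Measure.zero_prod, Measure.map_zero]

lemma mconv_add (μ₁ μ₂ γ : Measure ℝ) [SFinite γ] :
    mconv (μ₁ + μ₂) γ = mconv μ₁ γ + mconv μ₂ γ := by
  ext s hs
  rw [Measure.add_apply, mconv_apply _ _ hs, mconv_apply _ _ hs, mconv_apply _ _ hs,
    lintegral_add_measure]

lemma mconv_smul (c : ℝ≥0∞) (μ γ : Measure ℝ) [SFinite γ] :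
    mconv (c • μ) γ = c • mconv μ γ := by
  have h : (c • μ).prod γ = c • (μ.prod γ) := by
    ext s hs
    rw [Measure.prod_apply hs, Measure.smul_apply, Measure.prod_apply hs,
      lintegral_smul_measure, smul_eq_mul]
  rw [mconv, h, Measure.map_smul, mconv]

lemma convStep_zero (ψ : ℝ → ℝ) (γ : Measure ℝ) : convStep ψ γ 0 = 0 := by
  rw [convStep, mconv_zero, withDensity_zero_left]

lemma convStep_add (ψ : ℝ → ℝ) (μ₁ μ₂ γ : Measure ℝ) [SFinite γ] :
    convStep ψ γ (μ₁ + μ₂) = convStep ψ γ μ₁ + convStep ψ γ μ₂ := by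
  rw [convStep, mconv_add, withDensity_add_measure, convStep, convStep]

lemma convStep_smul (ψ : ℝ → ℝ) (c : ℝ≥0∞) (μ γ : Measure ℝ) [SFinite γ] :
    convStep ψ γ (c • μ) = c • convStep ψ γ μ := by
  rw [convStep, mconv_smul, withDensity_smul_measure, convStep]

lemma convStep_finset_sum (ψ : ℝ → ℝ) (γ : Measure ℝ) [SFinite γ]
    (s : Finset ℕ) (f : ℕ → Measure ℝ) :
    convStep ψ γ (∑ k ∈ s, f k) = ∑ k ∈ s, convStep ψ γ (f k) := by
  classical
  induction s using Finset.cons_induction with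
  | empty => simp [convStep_zero]
  | cons a s ha ih => rw [Finset.sum_cons, convStep_add, ih, Finset.sum_cons]

/-- Key density inequality: if `g x * f x ≤ 1` everywhere, then
`(μ.withDensity f).withDensity g ≤ μ` on measurable sets; no measurability of `f, g` needed. -/
lemma withDensity_withDensity_le (μ : Measure ℝ) (f g : ℝ → ℝ≥0∞)
    (h : ∀ x, g x * f x ≤ 1) {s : Set ℝ} (hs : MeasurableSet s) :
    (μ.withDensity f).withDensity g s ≤ μ s := by
  rw [withDensity_apply _ hs, restrict_withDensity hs]
  have key : ∀ μ' : Measure ℝ, (∫⁻ a, g a ∂(μ'.withDensity f)) ≤ μ' univ := by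
    intro μ'
    rw [MeasureTheory.lintegral]
    refine iSup₂_le fun φ hφ => ?_
    rw [SimpleFunc.lintegral]
    calc ∑ x ∈ φ.range, x * (μ'.withDensity f) (φ ⁻¹' {x})
        ≤ ∑ x ∈ φ.range, μ' (φ ⁻¹' {x}) := by
          refine Finset.sum_le_sum fun x _ => ?_
          rw [withDensity_apply _ (φ.measurableSet_preimage {x})]
          by_cases hx : x = ∞
          · have hf0 : ∀ᵐ a ∂μ'.restrict (φ ⁻¹' {x}), f a = 0 := by
              rw [ae_restrict_iff' (φ.measurableSet_preimage {x})]
              refine ae_of_all _ fun a ha => ?_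
              have hga : g a = ∞ := by
                have := hφ a
                rw [Set.mem_preimage, Set.mem_singleton_iff] at ha
                rw [ha, hx] at this
                exact top_le_iff.1 this
              by_contra hfa
              have := h a
              rw [hga, ENNReal.top_mul hfa] at this
              exact absurd this (by simp)
            have hz : ∫⁻ a in φ ⁻¹' {x}, f a ∂μ' = 0 := by
              rw [lintegral_congr_ae hf0, lintegral_zero]
            rw [hz, mul_zero]
            exact zero_le
          · rw [← lintegral_const_mul' x _ hx]
            calc ∫⁻ a in φ ⁻¹' {x}, x * f a ∂μ'
                ≤ ∫⁻ _ in φ ⁻¹' {x}, 1 ∂μ' := by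
                  refine setLIntegral_mono measurable_const fun a ha => ?_
                  rw [Set.mem_preimage, Set.mem_singleton_iff] at ha
                  calc x * f a ≤ g a * f a := by
                        refine mul_le_mul_left ?_ _
                        rw [← ha]; exact hφ a
                    _ ≤ 1 := h a
              _ = μ' (φ ⁻¹' {x}) := setLIntegral_one _
      _ = μ' (⋃ x ∈ φ.range, φ ⁻¹' {x}) := by
          refine (measure_biUnion_finset ?_ fun x _ => φ.measurableSet_preimage {x}).symm
          intro x _ y _ hxy
          refine Set.disjoint_left.2 fun a hax hay => hxy ?_
          rw [Set.mem_preimage, Set.mem_singleton_iff] at hax hay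
          rw [← hax, ← hay]
      _ ≤ μ' univ := measure_mono (subset_univ _)
  calc (∫⁻ a, g a ∂((μ.restrict s).withDensity f)) ≤ (μ.restrict s) univ := key _
    _ = μ s := by rw [Measure.restrict_apply_univ]

lemma mconv_Iic_eq_zero (ν γ : Measure ℝ) [SFinite γ]
    (hγ0 : γ {0} = 0) (hγc : γ (Set.Iio 0) = 0) (hνc : ν (Set.Iio 0) = 0) :
    mconv ν γ (Set.Iic 0) = 0 := by
  rw [mconv, Measure.map_apply measurable_add measurableSet_Iic]
  have hsub : (fun p : ℝ × ℝ => p.1 + p.2) ⁻¹' Iic 0 ⊆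
      (Iio 0 ×ˢ univ) ∪ (univ ×ˢ (Iio 0 ∪ {0})) := by
    rintro ⟨x, y⟩ hp
    simp only [Set.mem_preimage, Set.mem_Iic] at hp
    by_cases hx : x < 0
    · exact Or.inl ⟨hx, trivial⟩
    · push_neg at hx
      refine Or.inr ⟨trivial, ?_⟩
      have hy : y ≤ 0 := by linarith
      rcases lt_or_eq_of_le hy with h | h
      · exact Or.inl h
      · exact Or.inr h
  refine le_antisymm ?_ (zero_le)
  refine le_trans (measure_mono hsub) ?_
  refine le_trans (measure_union_le _ _) ?_
  have hγ : γ (Iio 0 ∪ {0}) = 0 := measure_union_null hγc hγ0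
  rw [Measure.prod_prod, Measure.prod_prod, hνc, hγ, zero_mul, mul_zero, add_zero]

/-- The key step: if `μ ≤ ν` then `δ₀ + q • T μ ≤ ν`. -/
lemma step_le (ψ : ℝ → ℝ) (γ ν : Measure ℝ) [SFinite γ] [SFinite ν]
    (q : ℝ) (hq : 0 < q) (hψ : ∀ x > (0 : ℝ), 0 < ψ x)
    (hγ0 : γ {0} = 0) (hγc : γ (Set.Iio 0) = 0) (hνc : ν (Set.Iio 0) = 0)
    (hν0 : ν {0} = 1)
    (heq : (ν.withDensity (fun x => ENNReal.ofReal (ψ x))).restrict (Set.Ioi 0) =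
      (ENNReal.ofReal q • mconv γ ν).restrict (Set.Ioi 0))
    (μ : Measure ℝ) (hμ : μ ≤ ν) :
    Measure.dirac 0 + ENNReal.ofReal q • convStep ψ γ μ ≤ ν := by
  set g : ℝ → ℝ≥0∞ := fun x => ENNReal.ofReal (ψ x)⁻¹ with hg
  refine Measure.le_iff.2 fun E hE => ?_
  rw [Measure.add_apply, Measure.smul_apply, smul_eq_mul]
  -- T μ E ≤ T ν E
  have hmono : convStep ψ γ μ E ≤ convStep ψ γ ν E :=
    Measure.le_iff.1 (convStep_mono ψ γ hμ) E hE
  -- T ν vanishes on Iic 0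
  have hIic : convStep ψ γ ν (E \ Ioi 0) = 0 := by
    have hsub : E \ Ioi 0 ⊆ Iic 0 := fun x hx => Set.mem_Iic.2 (not_lt.1 hx.2)
    have h0 : convStep ψ γ ν (Iic 0) = 0 := by
      rw [convStep, withDensity_apply _ measurableSet_Iic,
        setLIntegral_measure_zero _ _ (mconv_Iic_eq_zero ν γ hγ0 hγc hνc)]
    exact le_antisymm (h0 ▸ measure_mono hsub) (zero_le)
  -- main estimate on (0, ∞)
  have hpos : ENNReal.ofReal q * convStep ψ γ ν (E ∩ Ioi 0) ≤ ν (E ∩ Ioi 0) := by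
    set E' : Set ℝ := E ∩ Ioi 0 with hE'
    have hE'm : MeasurableSet E' := hE.inter measurableSet_Ioi
    have hE's : E' ⊆ Ioi 0 := inter_subset_right
    have step1 : ENNReal.ofReal q * convStep ψ γ ν E' =
        ((ENNReal.ofReal q • mconv γ ν).withDensity g) E' := by
      rw [convStep, ← mconv_comm ν γ, withDensity_smul_measure, Measure.smul_apply, smul_eq_mul]
    have step2 : ((ENNReal.ofReal q • mconv γ ν).withDensity g) E' =
        ((ν.withDensity (fun x => ENNReal.ofReal (ψ x))).withDensity g) E' := by
      rw [withDensity_apply _ hE'm, withDensity_apply _ hE'm,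
        ← Measure.restrict_restrict_of_subset hE's, ← heq,
        Measure.restrict_restrict_of_subset hE's]
    have step3 : ((ν.withDensity (fun x => ENNReal.ofReal (ψ x))).withDensity g) E' ≤ ν E' := by
      have hprod : ∀ x ∈ E', g x * ENNReal.ofReal (ψ x) ≤ 1 := by
        intro x hx
        have hψx : 0 < ψ x := hψ x (hE's hx)
        rw [hg]
        rw [← ENNReal.ofReal_mul (by positivity), inv_mul_cancel₀ (ne_of_gt hψx),
          ENNReal.ofReal_one]
      -- use the restriction to E' so that the pointwise bound holds everywhere
      have hgle : ∀ x, (E'.indicator g) x * ENNReal.ofReal (ψ x) ≤ 1 := by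
        intro x
        by_cases hx : x ∈ E'
        · rw [Set.indicator_of_mem hx]; exact hprod x hx
        · rw [Set.indicator_of_notMem hx, zero_mul]; exact zero_le_one
      have hind : ((ν.withDensity (fun x => ENNReal.ofReal (ψ x))).withDensity g) E' =
          ((ν.withDensity (fun x => ENNReal.ofReal (ψ x))).withDensity (E'.indicator g)) E' := by
        rw [withDensity_apply _ hE'm, withDensity_apply _ hE'm]
        exact lintegral_congr_ae ((ae_restrict_iff' hE'm).2
          (ae_of_all _ fun x hx => (Set.indicator_of_mem hx g).symm))
      rw [hind]
      exact withDensity_withDensity_le ν _ _ hgle hE'm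
    rw [step1, step2]
    exact step3
  -- dirac part
  have hdirac : Measure.dirac 0 E ≤ ν (E ∩ {0}) := by
    by_cases h0 : (0 : ℝ) ∈ E
    · have hI : E ∩ {0} = {0} :=
        Set.inter_eq_self_of_subset_right (Set.singleton_subset_iff.2 h0)
      rw [hI, hν0, Measure.dirac_apply' _ hE, Set.indicator_of_mem h0]
      exact le_rfl
    · rw [Measure.dirac_apply' _ hE, Set.indicator_of_notMem h0]
      exact zero_le
  -- combine
  have hsplit : convStep ψ γ ν E ≤ convStep ψ γ ν (E ∩ Ioi 0) := by
    calc convStep ψ γ ν E ≤ convStep ψ γ ν (E ∩ Ioi 0) + convStep ψ γ ν (E \ Ioi 0) :=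
          measure_le_inter_add_diff _ _ _
      _ = convStep ψ γ ν (E ∩ Ioi 0) := by rw [hIic, add_zero]
  have hdisj : Disjoint (E ∩ {0}) (E ∩ Ioi 0) := by
    refine Set.disjoint_left.2 fun x hx hx' => ?_
    have h1 : x = 0 := Set.mem_singleton_iff.1 hx.2
    have h2 : (0 : ℝ) < x := hx'.2
    rw [h1] at h2
    exact lt_irrefl _ h2
  have hfinal : ν (E ∩ {0}) + ν (E ∩ Ioi 0) ≤ ν E := by
    rw [← measure_union hdisj (hE.inter measurableSet_Ioi)]
    exact measure_mono (Set.union_subset Set.inter_subset_left Set.inter_subset_left)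
  refine le_trans (add_le_add hdirac
    (mul_le_mul_right (le_trans hmono hsplit) (ENNReal.ofReal q))) ?_
  exact le_trans (add_le_add le_rfl hpos) hfinal

/-- Partial sums of the series defining `m_q`. -/
noncomputable def mqPartial (ψ : ℝ → ℝ) (γ : Measure ℝ) (q : ℝ) (n : ℕ) : Measure ℝ :=
  ∑ k ∈ Finset.range n, ENNReal.ofReal (q ^ k) • (convStep ψ γ)^[k] (Measure.dirac 0)

lemma mqPartial_succ (ψ : ℝ → ℝ) (γ : Measure ℝ) [SFinite γ] {q : ℝ} (hq : 0 ≤ q) (n : ℕ) :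
    mqPartial ψ γ q (n + 1) =
      Measure.dirac 0 + ENNReal.ofReal q • convStep ψ γ (mqPartial ψ γ q n) := by
  simp only [mqPartial]
  rw [Finset.sum_range_succ', convStep_finset_sum, Finset.smul_sum]
  have h0 : ENNReal.ofReal (q ^ 0) • (convStep ψ γ)^[0] (Measure.dirac 0) =
      Measure.dirac 0 := by simp
  rw [h0, add_comm]
  congr 1
  refine Finset.sum_congr rfl fun k _ => ?_
  rw [convStep_smul, Function.iterate_succ_apply', smul_smul, ← ENNReal.ofReal_mul hq,
    ← pow_succ']

/-- Any measure `ν` with unit atom at `0` solving `ψ·ν = q·(γ⋆ν)` on `(0,∞)`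
dominates `m_q`. -/
theorem mq_le_of_solution (ψ : ℝ → ℝ) (γ ν : Measure ℝ) [SFinite γ] [SFinite ν]
    (q : ℝ) (hq : 0 < q) (hψ : ∀ x > (0 : ℝ), 0 < ψ x)
    (hγ0 : γ {0} = 0) (hγc : γ (Set.Iio 0) = 0) (hνc : ν (Set.Iio 0) = 0)
    (hν0 : ν {0} = 1)
    (heq : (ν.withDensity (fun x => ENNReal.ofReal (ψ x))).restrict (Set.Ioi 0) =
      (ENNReal.ofReal q • mconv γ ν).restrict (Set.Ioi 0)) :
    ∀ E : Set ℝ, MeasurableSet E → mq ψ γ q E ≤ ν E := by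
  intro E hE
  have hmain : ∀ n, mqPartial ψ γ q n ≤ ν := by
    intro n
    induction n with
    | zero =>
      refine Measure.le_iff.2 fun s hs => ?_
      simp [mqPartial]
    | succ n ih =>
      rw [mqPartial_succ ψ γ hq.le n]
      exact step_le ψ γ ν q hq hψ hγ0 hγc hνc hν0 heq _ ih
  calc mq ψ γ q E
      = ∑' k, (ENNReal.ofReal (q ^ k) • (convStep ψ γ)^[k] (Measure.dirac 0)) E := by
        rw [mq, Measure.sum_apply _ hE]
    _ = ⨆ n, ∑ k ∈ Finset.range n,
          (ENNReal.ofReal (q ^ k) • (convStep ψ γ)^[k] (Measure.dirac 0)) E :=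
        ENNReal.tsum_eq_iSup_nat
    _ = ⨆ n, mqPartial ψ γ q n E := by
        refine iSup_congr fun n => ?_
        simp only [mqPartial]
        exact (Measure.finset_sum_apply _ _ _).symm
    _ ≤ ν E := iSup_le fun n => Measure.le_iff.1 (hmain n) E hE
end

section
/- Let ν and λ be Borel measures on [0,∞) such that ν is carried by (c, ∞) for some c ≥ 0 and the equation f·ν = λ ⋆ ν holds for a measurable f : [0,∞) → (0,∞), where λ is Lebesgue measure on [0,∞). Then ν is absolutely continuous with respect to Lebesgue measure. -/
open MeasureTheory Set Real

/-- If `ν` is carried by `(c,∞)` and satisfies `f·ν = λ ⋆ ν` with `λ` Lebesgue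
measure on `[0,∞)` and `f > 0`, then `ν` is absolutely continuous with respect to
Lebesgue measure. -/
theorem absolutely_continuous_of_conv_eq (ν : Measure ℝ) [SigmaFinite ν]
    (c : ℝ) (hc : 0 ≤ c) (hν : ν (Set.Iic c) = 0)
    (f : ℝ → ℝ) (hfm : Measurable f) (hf : ∀ x ≥ (0 : ℝ), 0 < f x)
    (heq : ν.withDensity (fun x => ENNReal.ofReal (f x)) =
      mconv (MeasureTheory.volume.restrict (Set.Ici 0)) ν) :
    ν ≪ (MeasureTheory.volume : Measure ℝ) := by
  intro s hs
  set t := toMeasurable MeasureTheory.volume s with ht_def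
  have htm : MeasurableSet t := measurableSet_toMeasurable _ _
  have htvol : MeasureTheory.volume t = 0 := by
    rw [measure_toMeasurable]; exact hs
  have hst : s ⊆ t := subset_toMeasurable _ _
  suffices hνt : ν t = 0 by
    exact measure_mono_null hst hνt
  -- the convolution measure of t is zero
  have hconv : mconv (MeasureTheory.volume.restrict (Set.Ici 0)) ν t = 0 := by
    rw [mconv, Measure.map_apply (by fun_prop) htm,
      Measure.prod_apply_symm (htm.preimage (by fun_prop))]
    have : ∀ y : ℝ,
        (MeasureTheory.volume.restrict (Set.Ici 0))
          ((fun x => (x, y)) ⁻¹' ((fun p : ℝ × ℝ => p.1 + p.2) ⁻¹' t)) = 0 := by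
      intro y
      refine le_antisymm ?_ zero_le
      calc (MeasureTheory.volume.restrict (Set.Ici 0))
            ((fun x => (x, y)) ⁻¹' ((fun p : ℝ × ℝ => p.1 + p.2) ⁻¹' t))
          ≤ MeasureTheory.volume ((fun x : ℝ => x + y) ⁻¹' t) := by
            refine le_trans (Measure.restrict_le_self _) (le_of_eq rfl)
        _ = MeasureTheory.volume t := by
            rw [measure_preimage_add_right]
        _ = 0 := htvol
    simp [this]
  have hwd : ν.withDensity (fun x => ENNReal.ofReal (f x)) t = 0 := by
    rw [heq]; exact hconv
  rw [withDensity_apply _ htm] at hwd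
  have h0 : ∀ᵐ x ∂ ν.restrict t, ENNReal.ofReal (f x) = 0 :=
    (lintegral_eq_zero_iff (by fun_prop)).mp hwd
  have h1 : ∀ᵐ x ∂ ν, c < x := by
    rw [ae_iff]
    refine measure_mono_null (fun x hx => ?_) hν
    simpa using not_lt.mp hx
  have h1' : ∀ᵐ x ∂ ν.restrict t, c < x := ae_restrict_of_ae h1
  have : ∀ᵐ x ∂ ν.restrict t, False := by
    filter_upwards [h0, h1'] with x hx0 hx1
    have hfx : 0 < f x := hf x (le_of_lt (lt_of_le_of_lt hc hx1))
    simp [ENNReal.ofReal_eq_zero, not_le.mpr hfx] at hx0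
  have := ae_iff.mp this
  simpa [Measure.restrict_apply_univ] using
    (by simpa using this : ν.restrict t Set.univ = 0)
end
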